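/- Two graphs are isomorphic if and only if their clique matrices are isomorphic as binary matrices (i.e., there exist a permutation of rows and a permutation of columns taking one clique matrix to the other). -/

import Mathlib

/-- `S` is a maximal clique of `G`. -/
def IsMaxClique {V : Type*} (G : SimpleGraph V) (S : Set V) : Prop :=
  G.IsClique S ∧ ∀ T : Set V, G.IsClique T → S ⊆ T → T = S

lemma isMaxClique_map {V V' : Type*} {G : SimpleGraph V} {G' : SimpleGraph V'}
    (f : G ≃g G') {S : Set V} (h : IsMaxClique G S) : IsMaxClique G' (f '' S) := by
  constructor
  · rintro x ⟨a, ha, rfl⟩ y ⟨b, hb, rfl⟩ hxy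
    have hab : a ≠ b := fun e => hxy (congrArg f e)
    exact f.map_adj_iff.mpr (h.1 ha hb hab)
  · intro T hT hsub
    have hclique : G.IsClique (f.symm '' T) := by
      rintro x ⟨a, ha, rfl⟩ y ⟨b, hb, rfl⟩ hxy
      have hab : a ≠ b := fun e => hxy (congrArg f.symm e)
      exact f.symm.map_adj_iff.mpr (hT ha hb hab)
    have hS : S ⊆ f.symm '' T := by
      intro s hs
      exact ⟨f s, hsub ⟨s, hs, rfl⟩, f.symm_apply_apply s⟩
    have := h.2 _ hclique hS
    have : f '' (f.symm '' T) = f '' S := congrArg _ this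
    rwa [Set.image_image, Set.image_congr' (fun x => f.apply_symm_apply x), Set.image_id'] at this

lemma adj_iff_maxclique {V : Type*} [Fintype V] (G : SimpleGraph V) (u v : V) :
    G.Adj u v ↔ u ≠ v ∧ ∃ C : Set V, IsMaxClique G C ∧ u ∈ C ∧ v ∈ C := by
  constructor
  · intro h
    refine ⟨h.ne, ?_⟩
    have hpair : G.IsClique {u, v} := SimpleGraph.isClique_pair.mpr (fun _ => h)
    have hfin : ({T : Set V | G.IsClique T ∧ ({u, v} : Set V) ⊆ T}).Finite := Set.toFinite _
    obtain ⟨M, hM, hmax'⟩ := hfin.exists_maximal ⟨{u, v}, hpair, le_refl _⟩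
    have hmax : ∀ T ∈ {T : Set V | G.IsClique T ∧ ({u, v} : Set V) ⊆ T}, M ⊆ T → M = T :=
      fun T hT h => le_antisymm h (hmax' hT h)
    refine ⟨M, ⟨hM.1, fun T hT hMT => ?_⟩, hM.2 (by simp), hM.2 (by simp)⟩
    exact (hmax T ⟨hT, hM.2.trans hMT⟩ hMT).symm
  · rintro ⟨hne, C, hC, hu, hv⟩
    exact hC.1 hu hv hne

theorem graph_iso_iff_clique_matrix_iso {V V' : Type*} [Fintype V] [Fintype V']
    (G : SimpleGraph V) (G' : SimpleGraph V') :
    Nonempty (G ≃g G') ↔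
      ∃ (τ : V ≃ V')
        (π : {S : Set V // IsMaxClique G S} ≃ {S : Set V' // IsMaxClique G' S}),
        ∀ (v : V) (C : {S : Set V // IsMaxClique G S}),
          v ∈ C.1 ↔ τ v ∈ (π C).1 := by
  constructor
  · rintro ⟨f⟩
    refine ⟨f.toEquiv, ⟨fun C => ⟨f '' C.1, isMaxClique_map f C.2⟩,
      fun C => ⟨f.symm '' C.1, isMaxClique_map f.symm C.2⟩, ?_, ?_⟩, ?_⟩
    · intro C
      ext x
      simp [Set.image_image]
    · intro C
      ext x
      simp [Set.image_image]
    · intro v C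
      constructor
      · intro h; exact ⟨v, h, rfl⟩
      · rintro ⟨w, hw, hwv⟩
        have : w = v := f.toEquiv.injective hwv
        exact this ▸ hw
  · rintro ⟨τ, π, hπ⟩
    refine ⟨⟨τ, ?_⟩⟩
    intro a b
    rw [adj_iff_maxclique, adj_iff_maxclique]
    constructor
    · rintro ⟨hne, C', hC', ha, hb⟩
      refine ⟨fun e => hne (congrArg τ e), (π.symm ⟨C', hC'⟩).1, (π.symm ⟨C', hC'⟩).2, ?_, ?_⟩
      · rw [hπ a (π.symm ⟨C', hC'⟩), π.apply_symm_apply]; exact ha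
      · rw [hπ b (π.symm ⟨C', hC'⟩), π.apply_symm_apply]; exact hb
    · rintro ⟨hne, C, hC, ha, hb⟩
      exact ⟨τ.injective.ne hne, (π ⟨C, hC⟩).1, (π ⟨C, hC⟩).2,
        (hπ a ⟨C, hC⟩).mp ha, (hπ b ⟨C, hC⟩).mp hb⟩
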